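/- Let α be a scattered linear ordering and R an equivalence relation on α such that: for all subsets X < Y with X² ⊆ R and Y² ⊆ R, if the intersection over all x ∈ X, y ∈ Y of the open intervals ]x,y[ is empty, then (X ∪ Y)² ⊆ R. Then R = α². -/
import Mathlib


/-- A linear ordering is scattered if no subordering with at least two
elements is dense (in itself). -/
def IsScattered (α : Type*) [LinearOrder α] : Prop :=
  ∀ t : Set α, (∃ a ∈ t, ∃ b ∈ t, a ≠ b) →
    ¬(∀ x ∈ t, ∀ y ∈ t, x < y → ∃ z ∈ t, x < z ∧ z < y)

theorem scattered_induction {α : Type*} [LinearOrder α]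
    (hscat : IsScattered α)
    (R : α → α → Prop) (hR : Equivalence R)
    (hstep : ∀ X Y : Set α, (∀ x ∈ X, ∀ y ∈ Y, x < y) →
      (∀ a ∈ X, ∀ b ∈ X, R a b) → (∀ a ∈ Y, ∀ b ∈ Y, R a b) →
      (¬∃ z : α, ∀ x ∈ X, ∀ y ∈ Y, x < z ∧ z < y) →
      ∀ a ∈ X ∪ Y, ∀ b ∈ X ∪ Y, R a b) :
    ∀ x y : α, R x y := by
  classical
  let R' : α → α → Prop := fun a b => ∀ c ∈ Set.uIcc a b, ∀ d ∈ Set.uIcc a b, R c d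
  have hrefl : ∀ a, R' a a := by
    intro a c hc d hd
    rw [Set.uIcc_self, Set.mem_singleton_iff] at hc hd
    subst hc; subst hd; exact hR.refl _
  have hsymm : ∀ a b, R' a b → R' b a := by
    intro a b h c hc d hd
    rw [Set.uIcc_comm] at hc hd
    exact h c hc d hd
  have htrans : ∀ a b c, R' a b → R' b c → R' a c := by
    intro a b c h1 h2 x hx y hy
    have hb1 : b ∈ Set.uIcc a b := Set.right_mem_uIcc
    have hb2 : b ∈ Set.uIcc b c := Set.left_mem_uIcc
    rcases Set.uIcc_subset_uIcc_union_uIcc hx with hx1 | hx2 <;>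
      rcases Set.uIcc_subset_uIcc_union_uIcc hy with hy1 | hy2
    · exact h1 x hx1 y hy1
    · exact hR.trans (h1 x hx1 b hb1) (h2 b hb2 y hy2)
    · exact hR.trans (h2 x hx2 b hb2) (h1 b hb1 y hy1)
    · exact h2 x hx2 y hy2
  have hconv : ∀ a b c, R' a b → c ∈ Set.uIcc a b → R' a c := by
    intro a b c h hc x hx y hy
    have hsub : Set.uIcc a c ⊆ Set.uIcc a b :=
      Set.uIcc_subset_uIcc Set.left_mem_uIcc hc
    exact h x (hsub hx) y (hsub hy)
  have himp : ∀ a b, R' a b → R a b := fun a b h =>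
    h a Set.left_mem_uIcc b Set.right_mem_uIcc
  -- gap lemma: between two non-equivalent points there is a point
  -- non-equivalent to both
  have hgap : ∀ a b, a < b → ¬R' a b →
      ∃ w, a < w ∧ w < b ∧ ¬R' a w ∧ ¬R' w b := by
    intro a b hab hnab
    by_contra hno
    push_neg at hno
    apply hnab
    set X : Set α := {c | c ∈ Set.Icc a b ∧ R' a c} with hX
    set Y : Set α := {c | c ∈ Set.Icc a b ∧ R' c b} with hY
    have haX : a ∈ X := ⟨⟨le_refl a, hab.le⟩, hrefl a⟩
    have hbY : b ∈ Y := ⟨⟨hab.le, le_refl b⟩, hrefl b⟩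
    have hXY : ∀ c ∈ X, ∀ d ∈ Y, c < d := by
      intro c hc d hd
      by_contra hle
      push_neg at hle
      have hd' : d ∈ Set.uIcc a c := Set.Icc_subset_uIcc ⟨hd.1.1, hle⟩
      exact hnab (htrans a d b (hconv a c d hc.2 hd') hd.2)
    have hmem : ∀ x ∈ Set.Icc a b, x ∈ X ∪ Y := by
      intro x hx
      rcases eq_or_lt_of_le hx.1 with h1 | h1
      · exact Or.inl ⟨hx, by rw [← h1]; exact hrefl a⟩
      · rcases eq_or_lt_of_le hx.2 with h2 | h2
        · exact Or.inr ⟨hx, by rw [h2]; exact hrefl b⟩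
        · by_cases hax : R' a x
          · exact Or.inl ⟨hx, hax⟩
          · exact Or.inr ⟨hx, hno x h1 h2 hax⟩
    have hnoz : ¬∃ z : α, ∀ x ∈ X, ∀ y ∈ Y, x < z ∧ z < y := by
      rintro ⟨z, hz⟩
      have h1 := hz a haX b hbY
      rcases hmem z ⟨h1.1.le, h1.2.le⟩ with hzX | hzY
      · exact absurd (hz z hzX b hbY).1 (lt_irrefl z)
      · exact absurd (hz a haX z hzY).2 (lt_irrefl z)
    have hall := hstep X Y hXY
      (fun c hc c' hc' => himp c c' (htrans c a c' (hsymm a c hc.2) hc'.2))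
      (fun c hc c' hc' => himp c c' (htrans c b c' hc.2 (hsymm c' b hc'.2)))
      hnoz
    intro x hx y hy
    rw [Set.uIcc_of_le hab.le] at hx hy
    exact hall x (hmem x hx) y (hmem y hy)
  suffices h : ∀ x y : α, R' x y by
    exact fun x y => himp x y (h x y)
  by_contra hcon
  push_neg at hcon
  obtain ⟨u, v, huv⟩ := hcon
  let s : Setoid α := ⟨R', ⟨fun {a} => hrefl a, fun {a b} h => hsymm a b h,
    fun {a b c} h1 h2 => htrans a b c h1 h2⟩⟩
  let f : α → α := fun a => (Quotient.mk s a).out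
  have hfR : ∀ a, R' a (f a) :=
    fun a => hsymm _ _ (Quotient.exact ((Quotient.mk s a).out_eq))
  have hfeq : ∀ a b, R' a b → f a = f b := fun a b h =>
    congrArg Quotient.out (Quotient.sound (s := s) h)
  have hne : f u ≠ f v := by
    intro h
    exact huv (htrans u (f v) v (h ▸ hfR u) (hsymm v (f v) (hfR v)))
  refine hscat (Set.range f) ⟨f u, ⟨u, rfl⟩, f v, ⟨v, rfl⟩, hne⟩ ?_
  rintro x ⟨p, rfl⟩ y ⟨q, rfl⟩ hxy
  have hnR : ¬R' (f p) (f q) := by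
    intro h
    have hpq : R' p q := htrans p (f p) q (hfR p)
      (htrans (f p) (f q) q h (hsymm q (f q) (hfR q)))
    exact (ne_of_lt hxy) (hfeq p q hpq)
  obtain ⟨w, hw1, hw2, hw3, hw4⟩ := hgap (f p) (f q) hxy hnR
  refine ⟨f w, ⟨w, rfl⟩, ?_, ?_⟩
  · by_contra hle
    push_neg at hle
    have hmem : f p ∈ Set.uIcc w (f w) := by
      rw [Set.uIcc_comm]
      exact Set.Icc_subset_uIcc ⟨hle, hw1.le⟩
    exact hw3 (hsymm w (f p) (hconv w (f w) (f p) (hfR w) hmem))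
  · by_contra hle
    push_neg at hle
    have hmem : f q ∈ Set.uIcc w (f w) :=
      Set.Icc_subset_uIcc ⟨hw2.le, hle⟩
    exact hw4 (hconv w (f w) (f q) (hfR w) hmem)
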